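/- Let V_0 = {0,1}^{n+1} \ {0, (1,…,1)} and p_H the projection onto H = {Σx_i = 0}. For any u, u' ∈ V_0 with v = p_H(u), v' = p_H(u'), at least one of the following holds: v + v' = 0, or v + v' ∈ p_H(V_0), or max_j(u+u')_j − min_i(u+u')_i = 2. -/

import Mathlib

open Set Filter MeasureTheory Pointwise

/-- The hyperplane `H = {x ∈ ℝ^{n+1} : ∑ xᵢ = 0}`. -/
def Hset (n : ℕ) : Set (Fin (n + 1) → ℝ) := {x | ∑ i, x i = 0}

/-- The root lattice `Aₙ = ℤ^{n+1} ∩ H`. -/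
def Alat (n : ℕ) : Set (Fin (n + 1) → ℝ) :=
  {x | (∀ i, ∃ m : ℤ, x i = (m : ℝ)) ∧ ∑ i, x i = 0}

/-- The Voronoï region of `Aₙ` inside `H`. -/
def VorAn (n : ℕ) : Set (Fin (n + 1) → ℝ) :=
  {z | z ∈ Hset n ∧ ∀ x ∈ Alat n, ∑ i, (z i) ^ 2 ≤ ∑ i, (z i - x i) ^ 2}

/-- Orthogonal projection of `ℝ^{n+1}` onto the hyperplane `H`. -/
noncomputable def pH (n : ℕ) (u : Fin (n + 1) → ℝ) : Fin (n + 1) → ℝ :=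
  fun i => u i - (∑ j, u j) / (n + 1)

/-- `V₀ = {0,1}^{n+1} \ {0, (1,…,1)}`. -/
def V0set (n : ℕ) : Set (Fin (n + 1) → ℝ) :=
  {u | (∀ i, u i = 0 ∨ u i = 1) ∧ u ≠ 0 ∧ u ≠ fun _ => 1}

/-- The vertex set of the Voronoï region of `Aₙ`. -/
noncomputable def VPAn (n : ℕ) : Set (Fin (n + 1) → ℝ) := pH n '' V0set n


lemma pH_add' (n : ℕ) (u u' : Fin (n + 1) → ℝ) :
    pH n (u + u') = pH n u + pH n u' := by
  funext i
  simp only [pH, Pi.add_apply, Finset.sum_add_distrib]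
  ring

lemma pH_shift' (n : ℕ) (s : Fin (n + 1) → ℝ) (c : ℝ) :
    pH n (fun i => s i + c) = pH n s := by
  have hn : (n : ℝ) + 1 ≠ 0 := by positivity
  funext i
  simp only [pH, Finset.sum_add_distrib, Finset.sum_const, Finset.card_univ,
    Fintype.card_fin, nsmul_eq_mul]
  push_cast
  field_simp
  ring

lemma pH_const' (n : ℕ) (c : ℝ) : pH n (fun _ => c) = 0 := by
  have hn : (n : ℝ) + 1 ≠ 0 := by positivity
  funext i
  simp only [pH, Finset.sum_const, Finset.card_univ, Fintype.card_fin, nsmul_eq_mul,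
    Pi.zero_apply]
  push_cast
  field_simp
  ring

theorem sum_of_vertices_trichotomy_An (n : ℕ) (u u' : Fin (n + 1) → ℝ)
    (hu : u ∈ V0set n) (hu' : u' ∈ V0set n) :
    pH n u + pH n u' = 0 ∨ pH n u + pH n u' ∈ VPAn n ∨
      (⨆ i, (u + u') i) - (⨅ i, (u + u') i) = 2 := by
  obtain ⟨hu01, hu0, hu1⟩ := hu
  obtain ⟨hu'01, hu'0, hu'1⟩ := hu'
  set s : Fin (n + 1) → ℝ := u + u' with hs
  have hps : pH n s = pH n u + pH n u' := pH_add' n u u'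
  have hval : ∀ i, s i = 0 ∨ s i = 1 ∨ s i = 2 := by
    intro i
    rcases hu01 i with h | h <;> rcases hu'01 i with h' | h' <;>
      simp [hs, Pi.add_apply, h, h'] <;> norm_num
  by_cases h2 : ∃ i, s i = 2
  · by_cases h0 : ∃ i, s i = 0
    · -- third case
      right; right
      obtain ⟨i2, hi2⟩ := h2
      obtain ⟨i0, hi0⟩ := h0
      have hub : ∀ i, s i ≤ 2 := by
        intro i; rcases hval i with h | h | h <;> simp [h] <;> norm_num
      have hlb : ∀ i, 0 ≤ s i := by
        intro i; rcases hval i with h | h | h <;> simp [h] <;> norm_num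
      have hsup : (⨆ i, s i) = 2 := by
        refine le_antisymm (ciSup_le hub) ?_
        rw [← hi2]
        exact le_ciSup (Set.Finite.bddAbove (Set.finite_range s)) i2
      have hinf : (⨅ i, s i) = 0 := by
        refine le_antisymm ?_ (le_ciInf hlb)
        rw [← hi0]
        exact ciInf_le (Set.Finite.bddBelow (Set.finite_range s)) i0
      rw [hsup, hinf]; norm_num
    · -- all values in {1,2}; shift by -1
      push_neg at h0
      set w : Fin (n + 1) → ℝ := fun i => s i - 1 with hw
      have hw01 : ∀ i, w i = 0 ∨ w i = 1 := by
        intro i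
        rcases hval i with h | h | h
        · exact absurd h (h0 i)
        · left; simp [hw, h]
        · right; simp [hw, h]; ring
      have hpw : pH n w = pH n u + pH n u' := by
        rw [← hps]
        have : s = fun i => w i + 1 := by funext i; simp [hw]
        rw [this, pH_shift' n w 1]
      by_cases hwz : w = 0
      · left
        rw [← hpw, hwz]
        exact pH_const' n 0
      · by_cases hwo : w = fun _ => 1
        · left
          rw [← hpw, hwo, pH_const']
        · right; left
          exact ⟨w, ⟨hw01, hwz, hwo⟩, hpw⟩
  · -- all values in {0,1}
    push_neg at h2
    have hs01 : ∀ i, s i = 0 ∨ s i = 1 := by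
      intro i
      rcases hval i with h | h | h
      · exact Or.inl h
      · exact Or.inr h
      · exact absurd h (h2 i)
    by_cases hsz : s = 0
    · left
      rw [← hps, hsz]
      exact pH_const' n 0
    · by_cases hso : s = fun _ => 1
      · left
        rw [← hps, hso, pH_const']
      · right; left
        exact ⟨s, ⟨hs01, hsz, hso⟩, hps⟩
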